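/- Let d ≥ 1 be an integer, α ∈ (0,2), and let u₀ : ℝ^d → [0,∞) be a bounded measurable function. Then for every ε > 0, every t ≥ ε and every x ∈ ℝ^d: ∫_{ℝ^d} g(t, x−y)·u₀(y) dy ≥ (ε^{d/α}/(2^{d+α}·κ_{d,α}))·(∫_{ℝ^d} g(ε, y)·u₀(y) dy)·g(t,x). -/

import Mathlib

open MeasureTheory Real

/-- `κ_{d,α} = Γ((d+α)/2)/(π^{d/2} Γ(α/2))`. -/
noncomputable def kappaD (d : ℕ) (α : ℝ) : ℝ :=
  Real.Gamma (((d:ℝ) + α) / 2) / (Real.pi ^ ((d:ℝ) / 2) * Real.Gamma (α / 2))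

/-- `g(t,x) = κ_{d,α} t / (t^{2/α} + |x|²)^{(d+α)/2}`. -/
noncomputable def gKer (d : ℕ) (α : ℝ) (t : ℝ) (x : EuclideanSpace ℝ (Fin d)) : ℝ :=
  kappaD d α * t / (t ^ (2/α) + ‖x‖ ^ 2) ^ (((d:ℝ) + α) / 2)

lemma kappaD_pos (d : ℕ) (α : ℝ) (hα : 0 < α) : 0 < kappaD d α := by
  unfold kappaD
  have h1 : 0 < Real.Gamma (((d:ℝ) + α) / 2) := Real.Gamma_pos_of_pos (by positivity)
  have h2 : 0 < Real.Gamma (α / 2) := Real.Gamma_pos_of_pos (by positivity)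
  have h3 : (0:ℝ) < Real.pi ^ ((d:ℝ)/2) := Real.rpow_pos_of_pos Real.pi_pos _
  positivity

lemma gKer_nonneg (d : ℕ) (α : ℝ) (hα : 0 < α) (t : ℝ) (ht : 0 < t)
    (x : EuclideanSpace ℝ (Fin d)) : 0 ≤ gKer d α t x := by
  have := kappaD_pos d α hα
  unfold gKer
  positivity

/-- key pointwise estimate -/
lemma gKer_pointwise (d : ℕ) (α : ℝ) (hα : 0 < α) (ε t : ℝ) (hε : 0 < ε) (ht : ε ≤ t)
    (x y : EuclideanSpace ℝ (Fin d)) :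
    (ε ^ ((d:ℝ)/α) / ((2:ℝ) ^ ((d:ℝ) + α) * kappaD d α)) * gKer d α ε y * gKer d α t x
      ≤ gKer d α t (x - y) := by
  have ht0 : 0 < t := hε.trans_le ht
  have hκ := kappaD_pos d α hα
  set κ : ℝ := kappaD d α with hκ_def
  set p : ℝ := ((d:ℝ) + α) / 2 with hp_def
  have hp : 0 < p := by positivity
  set A : ℝ := t ^ (2/α) + ‖x - y‖ ^ 2 with hA_def
  set B : ℝ := t ^ (2/α) + ‖x‖ ^ 2 with hB_def
  set C : ℝ := ε ^ (2/α) + ‖y‖ ^ 2 with hC_def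
  have htr : (0:ℝ) < t ^ (2/α) := Real.rpow_pos_of_pos ht0 _
  have her : (0:ℝ) < ε ^ (2/α) := Real.rpow_pos_of_pos hε _
  have hA : 0 < A := by positivity
  have hB : 0 < B := by positivity
  have hC : 0 < C := by positivity
  have hmon : ε ^ (2/α) ≤ t ^ (2/α) :=
    Real.rpow_le_rpow hε.le ht (by positivity)
  have hxy : ‖x - y‖ ^ 2 ≤ 2 * ‖x‖ ^ 2 + 2 * ‖y‖ ^ 2 := by
    nlinarith [norm_sub_le x y, norm_nonneg x, norm_nonneg y, norm_nonneg (x - y),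
      sq_nonneg (‖x‖ - ‖y‖)]
  have hkey : ε ^ (2/α) * A ≤ 4 * (B * C) := by
    rw [hA_def, hB_def, hC_def]
    nlinarith [mul_nonneg (sq_nonneg ‖x‖) (sq_nonneg ‖y‖), sq_nonneg ‖x‖, sq_nonneg ‖y‖,
      mul_le_mul_of_nonneg_right hmon (sq_nonneg ‖y‖),
      mul_le_mul_of_nonneg_left hxy her.le]
  have hkeyp : (ε ^ (2/α) * A) ^ p ≤ (4 * (B * C)) ^ p :=
    Real.rpow_le_rpow (by positivity) hkey hp.le
  have e1 : (ε ^ (2/α) * A) ^ p = ε ^ ((d:ℝ)/α) * ε * A ^ p := by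
    rw [Real.mul_rpow (by positivity) hA.le, ← Real.rpow_mul hε.le]
    have : 2/α * p = (d:ℝ)/α + 1 := by
      rw [hp_def]; field_simp
    rw [this, Real.rpow_add hε, Real.rpow_one]
  have e2 : (4 * (B * C)) ^ p = (2:ℝ) ^ ((d:ℝ) + α) * (B ^ p * C ^ p) := by
    rw [Real.mul_rpow (by norm_num) (by positivity), Real.mul_rpow hB.le hC.le]
    congr 1
    rw [show (4:ℝ) = (2:ℝ) ^ (2:ℝ) by
      rw [show (2:ℝ) = ((2:ℕ):ℝ) by norm_num, Real.rpow_natCast]; norm_num]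
    rw [← Real.rpow_mul (by norm_num)]
    congr 1
    rw [hp_def]; ring
  rw [e1, e2] at hkeyp
  -- now conclude
  have hAp : (0:ℝ) < A ^ p := Real.rpow_pos_of_pos hA _
  have hBp : (0:ℝ) < B ^ p := Real.rpow_pos_of_pos hB _
  have hCp : (0:ℝ) < C ^ p := Real.rpow_pos_of_pos hC _
  have h2pow : (0:ℝ) < (2:ℝ) ^ ((d:ℝ) + α) := Real.rpow_pos_of_pos (by norm_num) _
  show ε ^ ((d:ℝ)/α) / ((2:ℝ) ^ ((d:ℝ) + α) * κ) * (κ * ε / C ^ p) * (κ * t / B ^ p)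
      ≤ κ * t / A ^ p
  rw [show ε ^ ((d:ℝ)/α) / ((2:ℝ) ^ ((d:ℝ) + α) * κ) * (κ * ε / C ^ p) * (κ * t / B ^ p)
      = (κ * t) * ((ε ^ ((d:ℝ)/α) * ε) / ((2:ℝ) ^ ((d:ℝ) + α) * (B ^ p * C ^ p))) by
      field_simp]
  rw [show κ * t / A ^ p = (κ * t) * (1 / A ^ p) by ring]
  apply mul_le_mul_of_nonneg_left _ (by positivity)
  rw [div_le_div_iff₀ (by positivity) hAp]
  linarith [hkeyp]

/-- lower bound of `∫ g(t, x−y) u₀(y) dy` in terms of `g(t,x)`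
for `t ≥ ε`, for nonnegative bounded measurable `u₀`. -/
theorem g_convolution_initial_data_lower_bound
    (d : ℕ) (hd : 1 ≤ d) (α : ℝ) (hα : α ∈ Set.Ioo (0:ℝ) 2)
    (u₀ : EuclideanSpace ℝ (Fin d) → ℝ) (hmeas : Measurable u₀)
    (hnn : ∀ y, 0 ≤ u₀ y) (hbdd : ∃ M : ℝ, ∀ y, u₀ y ≤ M)
    (ε : ℝ) (hε : 0 < ε) (t : ℝ) (ht : ε ≤ t) (x : EuclideanSpace ℝ (Fin d)) :
    (ε ^ ((d:ℝ)/α) / ((2:ℝ) ^ ((d:ℝ) + α) * kappaD d α)) *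
        (∫ y : EuclideanSpace ℝ (Fin d), gKer d α ε y * u₀ y) * gKer d α t x
      ≤ ∫ y : EuclideanSpace ℝ (Fin d), gKer d α t (x - y) * u₀ y := by
  obtain ⟨hα0, hα2⟩ := hα
  have ht0 : 0 < t := hε.trans_le ht
  have hκ := kappaD_pos d α hα0
  set κ : ℝ := kappaD d α with hκ_def
  set p : ℝ := ((d:ℝ) + α) / 2 with hp_def
  have hp : 0 < p := by positivity
  have htr : (0:ℝ) < t ^ (2/α) := Real.rpow_pos_of_pos ht0 _
  -- integrability of gKer d α t
  have hIntg : Integrable (fun z : EuclideanSpace ℝ (Fin d) => gKer d α t z) := by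
    set m : ℝ := min (t ^ (2/α)) 1 with hm_def
    have hm : 0 < m := lt_min htr one_pos
    have hm1 : m ≤ 1 := min_le_right _ _
    have hmt : m ≤ t ^ (2/α) := min_le_left _ _
    have hdr : ((Module.finrank ℝ (EuclideanSpace ℝ (Fin d))):ℝ) < (d:ℝ) + α := by
      rw [finrank_euclideanSpace_fin]; linarith
    refine ((integrable_one_add_norm (μ := volume) hdr).const_mul
      (κ * t / (m/2) ^ p)).mono' ?_ (Filter.Eventually.of_forall fun z => ?_)
    · apply Measurable.aestronglyMeasurable
      unfold gKer
      fun_prop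
    · have hz : (0:ℝ) < 1 + ‖z‖ := by positivity
      have hbound : (m/2) ^ p * (1 + ‖z‖) ^ ((d:ℝ) + α) ≤ (t ^ (2/α) + ‖z‖ ^ 2) ^ p := by
        have h1 : m/2 * (1 + ‖z‖) ^ 2 ≤ t ^ (2/α) + ‖z‖ ^ 2 := by
          nlinarith [sq_nonneg (1 - ‖z‖), norm_nonneg z, sq_nonneg ‖z‖]
        calc (m/2) ^ p * (1 + ‖z‖) ^ ((d:ℝ) + α)
            = (m/2 * (1 + ‖z‖) ^ 2) ^ p := by
              rw [Real.mul_rpow (by positivity) (by positivity)]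
              congr 1
              rw [← Real.rpow_natCast (1 + ‖z‖) 2, ← Real.rpow_mul hz.le]
              congr 1
              push_cast
              rw [hp_def]; ring
          _ ≤ (t ^ (2/α) + ‖z‖ ^ 2) ^ p := Real.rpow_le_rpow (by positivity) h1 hp.le
      have hApos : (0:ℝ) < (t ^ (2/α) + ‖z‖ ^ 2) ^ p := by positivity
      have hgnn : 0 ≤ gKer d α t z := gKer_nonneg d α hα0 t ht0 z
      rw [Real.norm_of_nonneg hgnn]
      show gKer d α t z ≤ κ * t / (m/2) ^ p * (1 + ‖z‖) ^ (-((d:ℝ) + α))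
      rw [Real.rpow_neg hz.le]
      unfold gKer
      rw [← hκ_def, ← hp_def, div_le_iff₀ hApos]
      have hm2p : (0:ℝ) < (m/2) ^ p := by positivity
      rw [div_mul_eq_mul_div, div_mul_eq_mul_div, le_div_iff₀ hm2p]
      calc κ * t * (m/2) ^ p
          = κ * t * ((m/2) ^ p * ((1 + ‖z‖) ^ ((d:ℝ) + α) * ((1 + ‖z‖) ^ ((d:ℝ) + α))⁻¹)) := by
            rw [mul_inv_cancel₀ (by positivity), mul_one]
        _ = κ * t * ((1 + ‖z‖) ^ ((d:ℝ) + α))⁻¹ * ((m/2) ^ p * (1 + ‖z‖) ^ ((d:ℝ) + α)) := by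
            ring
        _ ≤ κ * t * ((1 + ‖z‖) ^ ((d:ℝ) + α))⁻¹ * ((t ^ (2/α) + ‖z‖ ^ 2) ^ p) := by
            apply mul_le_mul_of_nonneg_left hbound (by positivity)
  have hIntg2 : Integrable (fun y : EuclideanSpace ℝ (Fin d) => gKer d α t (x - y)) :=
    hIntg.comp_sub_left x
  obtain ⟨M, hM⟩ := hbdd
  have hInt3 : Integrable (fun y : EuclideanSpace ℝ (Fin d) => gKer d α t (x - y) * u₀ y) := by
    have := hIntg2.bdd_mul hmeas.aestronglyMeasurable
      (c := max M 0) (Filter.Eventually.of_forall fun y => by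
        rw [Real.norm_of_nonneg (hnn y)]
        exact le_max_of_le_left (hM y))
    simpa [mul_comm] using this
  set c : ℝ := ε ^ ((d:ℝ)/α) / ((2:ℝ) ^ ((d:ℝ) + α) * κ) with hc_def
  have hc : 0 ≤ c := by
    have h2pow : (0:ℝ) < (2:ℝ) ^ ((d:ℝ) + α) := Real.rpow_pos_of_pos (by norm_num) _
    positivity
  calc c * (∫ y : EuclideanSpace ℝ (Fin d), gKer d α ε y * u₀ y) * gKer d α t x
      = ∫ y : EuclideanSpace ℝ (Fin d), c * (gKer d α ε y * u₀ y) * gKer d α t x := by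
        rw [integral_mul_const, integral_const_mul]
    _ ≤ ∫ y : EuclideanSpace ℝ (Fin d), gKer d α t (x - y) * u₀ y := by
        apply integral_mono_of_nonneg
        · exact Filter.Eventually.of_forall fun y =>
            mul_nonneg (mul_nonneg hc (mul_nonneg (gKer_nonneg d α hα0 ε hε y) (hnn y)))
              (gKer_nonneg d α hα0 t ht0 x)
        · exact hInt3
        · refine Filter.Eventually.of_forall fun y => ?_
          have h := gKer_pointwise d α hα0 ε t hε ht x y
          have h2 := mul_le_mul_of_nonneg_right h (hnn y)
          calc c * (gKer d α ε y * u₀ y) * gKer d α t x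
              = c * gKer d α ε y * gKer d α t x * u₀ y := by ring
            _ ≤ gKer d α t (x - y) * u₀ y := h2
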